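/- arXiv:2105.10225 — 2 statements merged into one kernel-verified Lean document; each statement's English description precedes it below -/
import Mathlib

section
/- Let f be an optimal integer flow of the network D, y an optimal node potential, and D' the reduced network. Then for every proper directed cycle C in the residual graph D'_f of D' with respect to (the restriction of) f, the flow f + χ(C) (extending χ(C) by 0 on arcs of X) is an optimal integer flow of D different from f. -/
open scoped Classical
noncomputable section

/-- A network: finite directed graph with arc set `A`, lower/upper capacities `l`, `u`,
node balances `b` and arc costs `c`. -/
structure Network (V : Type) [Fintype V] [DecidableEq V] where
  A : Finset (V × V)
  l : V × V → ℤ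
  u : V × V → ℤ
  b : V → ℤ
  c : V × V → ℝ

variable {V : Type} [Fintype V] [DecidableEq V]

namespace Network

/-- No anti-parallel arcs, and `0 ≤ l ≤ u` on every arc. -/
def Wellformed (N : Network V) : Prop :=
  (∀ a ∈ N.A, (a.2, a.1) ∉ N.A) ∧ ∀ a ∈ N.A, 0 ≤ N.l a ∧ N.l a ≤ N.u a

/-- A feasible integer flow: capacity constraints, vanishing outside `A`, flow balance. -/
def Feasible (N : Network V) (f : V × V → ℤ) : Prop :=
  (∀ a ∈ N.A, N.l a ≤ f a ∧ f a ≤ N.u a) ∧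
  (∀ a, a ∉ N.A → f a = 0) ∧
  ∀ i : V, ((∑ a ∈ N.A.filter fun a => a.1 = i, f a)
         - ∑ a ∈ N.A.filter fun a => a.2 = i, f a) = N.b i

/-- The cost of a flow. -/
def cost (N : Network V) (f : V × V → ℤ) : ℝ := ∑ a ∈ N.A, N.c a * (f a : ℝ)

/-- A flow is optimal if it is feasible of minimum cost. -/
def Optimal (N : Network V) (f : V × V → ℤ) : Prop :=
  N.Feasible f ∧ ∀ g, N.Feasible g → N.cost f ≤ N.cost g

/-- The arc set `A_f` of the residual graph `D_f`. -/
def resArcs (N : Network V) (f : V × V → ℤ) : Finset (V × V) :=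
  N.A.filter (fun a => f a < N.u a) ∪ (N.A.filter fun a => N.l a < f a).image Prod.swap

/-- Residual cost of a residual arc: `c_{ij}` on forward arcs, `-c_{ji}` on backward arcs. -/
def resCost (N : Network V) (a : V × V) : ℝ :=
  if a ∈ N.A then N.c a else -N.c (a.2, a.1)

/-- Residual capacity of a residual arc. -/
def resCap (N : Network V) (f : V × V → ℤ) (a : V × V) : ℤ :=
  if a ∈ N.A then N.u a - f a else f (a.2, a.1) - N.l (a.2, a.1)

/-- Reduced cost of an arc of `A` w.r.t. node potentials `y`. -/
def redCost (N : Network V) (y : V → ℝ) (a : V × V) : ℝ := N.c a + y a.1 - y a.2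

/-- Residual reduced cost of a residual arc w.r.t. node potentials `y`. -/
def resRedCost (N : Network V) (y : V → ℝ) (a : V × V) : ℝ := N.resCost a + y a.1 - y a.2

/-- `y` is an optimal node potential for `f`. -/
def OptPotential (N : Network V) (f : V × V → ℤ) (y : V → ℝ) : Prop :=
  ∀ a ∈ N.resArcs f, 0 ≤ N.resRedCost y a

end Network

/-- A (simple, directed) cycle: a nonempty duplicate-free list of at least two vertices,
traversed cyclically. -/
structure Cyc (V : Type) where
  verts : List V
  nodup : verts.Nodup
  two_le : 2 ≤ verts.length

/-- The arcs of a cycle: consecutive (cyclic) pairs of vertices. -/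
def Cyc.arcs (C : Cyc V) : Finset (V × V) :=
  (C.verts.zip (C.verts.rotate 1)).toFinset

/-- A cycle is proper if it contains no pair of anti-parallel arcs. -/
def Cyc.Proper (C : Cyc V) : Prop := ∀ a ∈ C.arcs, (a.2, a.1) ∉ C.arcs

/-- The incidence vector `χ(C)` of a cycle. -/
def Cyc.chi (C : Cyc V) : V × V → ℤ :=
  fun a => if a ∈ C.arcs then 1 else if (a.2, a.1) ∈ C.arcs then -1 else 0

namespace Network

/-- `C` is a directed cycle of the residual graph `D_f`. -/
def IsResCycle (N : Network V) (f : V × V → ℤ) (C : Cyc V) : Prop :=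
  ∀ a ∈ C.arcs, a ∈ N.resArcs f

/-- The cost `c(f,C)` of a cycle in the residual graph. -/
def cycCost (N : Network V) (C : Cyc V) : ℝ := ∑ a ∈ C.arcs, N.resCost a

end Network

namespace Network

/-- The incidence vector `χ(C) ∈ {−1,0,1}^A` of a residual cycle, as a vector indexed by
the arcs of the network (zero outside `A`). -/
def chi (N : Network V) (C : Cyc V) : V × V → ℤ :=
  fun a => if a ∈ N.A then C.chi a else 0

end Network

namespace Network

/-- The reduced network `D' = (V, A∖X)` where `X` is the set of arcs with nonzero reduced
cost, with balances adapted by the flow `f` on the removed arcs. -/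
def reduced (N : Network V) (f : V × V → ℤ) (y : V → ℝ) : Network V where
  A := N.A.filter fun a => N.redCost y a = 0
  l := N.l
  u := N.u
  c := N.c
  b := fun i =>
    N.b i
      - ∑ a ∈ (N.A.filter fun a => N.redCost y a ≠ 0).filter (fun a => a.1 = i), f a
      + ∑ a ∈ (N.A.filter fun a => N.redCost y a ≠ 0).filter (fun a => a.2 = i), f a

end Network


section Aux

lemma CycAux.zip_nodup (C : Cyc V) : (C.verts.zip (C.verts.rotate 1)).Nodup := by
  have hlen : (C.verts.rotate 1).length = C.verts.length := List.length_rotate _ _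
  have hfst : (C.verts.zip (C.verts.rotate 1)).map Prod.fst = C.verts :=
    List.map_fst_zip (le_of_eq hlen.symm)
  have := C.nodup
  rw [← hfst] at this
  exact this.of_map _

lemma CycAux.telescope {M : Type*} [AddCommGroup M] (C : Cyc V) (g : V → M) :
    ∑ e ∈ C.arcs, (g e.1 - g e.2) = 0 := by
  have hlen : (C.verts.rotate 1).length = C.verts.length := List.length_rotate _ _
  have hfst : (C.verts.zip (C.verts.rotate 1)).map Prod.fst = C.verts :=
    List.map_fst_zip (le_of_eq hlen.symm)
  have hsnd : (C.verts.zip (C.verts.rotate 1)).map Prod.snd = C.verts.rotate 1 :=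
    List.map_snd_zip (le_of_eq hlen)
  rw [Cyc.arcs, List.sum_toFinset _ (CycAux.zip_nodup C)]
  have hsplit : ∀ (L : List (V × V)), (L.map fun e => g e.1 - g e.2).sum
      = (L.map (g ∘ Prod.fst)).sum - (L.map (g ∘ Prod.snd)).sum := by
    intro L; induction L with
    | nil => simp
    | cons a L ih => simp [ih]; abel
  rw [hsplit, ← List.map_map, ← List.map_map, hfst, hsnd, List.map_rotate,
    (List.rotate_perm _ _).sum_eq, sub_self]

lemma CycAux.arcs_nonempty (C : Cyc V) : C.arcs.Nonempty := by
  have hlen : (C.verts.zip (C.verts.rotate 1)).length = C.verts.length := by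
    rw [List.length_zip, List.length_rotate, min_self]
  have h2 := C.two_le
  have hpos : 0 < (C.verts.zip (C.verts.rotate 1)).length := by omega
  obtain ⟨e, he⟩ := List.exists_mem_of_length_pos hpos
  exact ⟨e, List.mem_toFinset.mpr he⟩

lemma NetworkAux.key_mem (N : Network V) (hN : N.Wellformed) (f : V × V → ℤ) (y : V → ℝ)
    (C : Cyc V)
    (hCres : (N.reduced f y).IsResCycle
      (fun a => if a ∈ (N.reduced f y).A then f a else 0) C)
    {e : V × V} (he : e ∈ C.arcs) :
    (e ∈ N.A ∧ N.redCost y e = 0 ∧ f e < N.u e ∧ (e.2, e.1) ∉ N.A) ∨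
    ((e.2, e.1) ∈ N.A ∧ N.redCost y (e.2, e.1) = 0 ∧ N.l (e.2, e.1) < f (e.2, e.1)
      ∧ e ∉ N.A) := by
  have h := hCres e he
  rw [Network.resArcs, Finset.mem_union] at h
  rcases h with h | h
  · left
    rw [Finset.mem_filter] at h
    obtain ⟨hA', hlt⟩ := h
    rw [if_pos hA'] at hlt
    have hA' : e ∈ N.A ∧ N.redCost y e = 0 := Finset.mem_filter.mp hA'
    exact ⟨hA'.1, hA'.2, hlt, hN.1 e hA'.1⟩
  · right
    rw [Finset.mem_image] at h
    obtain ⟨a, ha, hswap⟩ := h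
    rw [Finset.mem_filter] at ha
    obtain ⟨hA', hlt⟩ := ha
    rw [if_pos hA'] at hlt
    have hA' : a ∈ N.A ∧ N.redCost y a = 0 := Finset.mem_filter.mp hA'
    have h1 : (e.2, e.1) = a := by
      rw [← hswap]; rfl
    rw [h1]
    have heA : e ∉ N.A := by
      have := hN.1 a hA'.1
      rwa [show (a.2, a.1) = e by rw [← hswap]; rfl] at this
    exact ⟨hA'.1, hA'.2, hlt, heA⟩

lemma NetworkAux.sum_chi_mul {M : Type*} [CommRing M] (N : Network V) (C : Cyc V)
    (hCproper : C.Proper)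
    (hkey : ∀ e ∈ C.arcs, (e ∈ N.A ∧ (e.2, e.1) ∉ N.A) ∨ ((e.2, e.1) ∈ N.A ∧ e ∉ N.A))
    (w : V × V → M) :
    ∑ a ∈ N.A, (N.chi C a : M) * w a
      = ∑ e ∈ C.arcs, (if e ∈ N.A then w e else - w (e.2, e.1)) := by
  have hchi : ∀ a ∈ N.A, ((N.chi C a : M)) * w a
      = (if a ∈ C.arcs then w a else 0) - (if (a.2, a.1) ∈ C.arcs then w a else 0) := by
    intro a ha
    rw [Network.chi, if_pos ha, Cyc.chi]
    by_cases h1 : a ∈ C.arcs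
    · have h2 : (a.2, a.1) ∉ C.arcs := hCproper a h1
      rw [if_pos h1, if_pos h1, if_neg h2]; push_cast; ring
    · rw [if_neg h1, if_neg h1]
      by_cases h2 : (a.2, a.1) ∈ C.arcs
      · rw [if_pos h2, if_pos h2]; push_cast; ring
      · rw [if_neg h2, if_neg h2]; push_cast; ring
  rw [Finset.sum_congr rfl hchi, Finset.sum_sub_distrib]
  have e1 : ∑ a ∈ N.A, (if a ∈ C.arcs then w a else 0)
      = ∑ e ∈ C.arcs, (if e ∈ N.A then w e else 0) := by
    rw [← Finset.sum_filter, ← Finset.sum_filter]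
    apply Finset.sum_congr _ (fun _ _ => rfl)
    ext a; simp [Finset.mem_filter, and_comm]
  have e2 : ∑ a ∈ N.A, (if (a.2, a.1) ∈ C.arcs then w a else 0)
      = ∑ e ∈ C.arcs, (if (e.2, e.1) ∈ N.A then w (e.2, e.1) else 0) := by
    rw [← Finset.sum_filter, ← Finset.sum_filter]
    apply Finset.sum_nbij' (i := Prod.swap) (j := Prod.swap)
    · intro a ha
      rw [Finset.mem_filter] at ha ⊢
      exact ⟨ha.2, by simpa using ha.1⟩
    · intro a ha
      rw [Finset.mem_filter] at ha ⊢
      exact ⟨ha.2, by simpa using ha.1⟩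
    · intro a _; simp
    · intro a _; simp
    · intro a _; simp
  rw [e1, e2, ← Finset.sum_sub_distrib]
  apply Finset.sum_congr rfl
  intro e he
  rcases hkey e he with ⟨h1, h2⟩ | ⟨h1, h2⟩
  · rw [if_pos h1, if_pos h1, if_neg h2, sub_zero]
  · rw [if_neg h2, if_neg h2, if_pos h1, zero_sub]

end Aux

/-- Every proper directed cycle in the residual graph of the reduced network `D'` (w.r.t.
the restriction of `f` to `A'`) induces, via `f + χ(C)` (extending `χ(C)` by `0` on the
removed arcs `X`), an optimal integer flow of `D` different from `f`. -/
theorem proper_cycle_in_reduced_gives_other_optimal (N : Network V) (hN : N.Wellformed)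
    (f : V × V → ℤ) (hf : N.Optimal f) (y : V → ℝ) (hy : N.OptPotential f y)
    (C : Cyc V) (hCres :
      (N.reduced f y).IsResCycle (fun a => if a ∈ (N.reduced f y).A then f a else 0) C)
    (hCproper : C.Proper) :
    N.Optimal (fun a => f a + N.chi C a) ∧ (fun a => f a + N.chi C a) ≠ f := by
  classical
  have hkey : ∀ e ∈ C.arcs,
      (e ∈ N.A ∧ N.redCost y e = 0 ∧ f e < N.u e ∧ (e.2, e.1) ∉ N.A) ∨
      ((e.2, e.1) ∈ N.A ∧ N.redCost y (e.2, e.1) = 0 ∧ N.l (e.2, e.1) < f (e.2, e.1)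
        ∧ e ∉ N.A) := fun e he => NetworkAux.key_mem N hN f y C hCres he
  have hkey' : ∀ e ∈ C.arcs,
      (e ∈ N.A ∧ (e.2, e.1) ∉ N.A) ∨ ((e.2, e.1) ∈ N.A ∧ e ∉ N.A) := by
    intro e he
    rcases hkey e he with ⟨h1, _, _, h4⟩ | ⟨h1, _, _, h4⟩
    · exact Or.inl ⟨h1, h4⟩
    · exact Or.inr ⟨h1, h4⟩
  have hfeas : N.Feasible (fun a => f a + N.chi C a) := by
    refine ⟨?_, ?_, ?_⟩
    · intro a ha
      show N.l a ≤ f a + N.chi C a ∧ f a + N.chi C a ≤ N.u a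
      have hb := hf.1.1 a ha
      have hchia : N.chi C a = C.chi a := by rw [Network.chi, if_pos ha]
      by_cases h1 : a ∈ C.arcs
      · rcases hkey a h1 with ⟨_, _, hlt, _⟩ | ⟨_, _, _, hnA⟩
        · have hc1 : N.chi C a = 1 := by rw [hchia, Cyc.chi, if_pos h1]
          omega
        · exact absurd ha hnA
      · by_cases h2 : (a.2, a.1) ∈ C.arcs
        · rcases hkey _ h2 with ⟨hmem, _, _, _⟩ | ⟨hmem, _, hlt, _⟩
          · exact absurd hmem (hN.1 a ha)
          · have hc1 : N.chi C a = -1 := by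
              rw [hchia, Cyc.chi, if_neg h1, if_pos h2]
            have hlt' : N.l a < f a := by simpa using hlt
            omega
        · have hc1 : N.chi C a = 0 := by rw [hchia, Cyc.chi, if_neg h1, if_neg h2]
          omega
    · intro a ha
      show f a + N.chi C a = 0
      rw [Network.chi, if_neg ha, hf.1.2.1 a ha]
      ring
    · intro i
      have hb := hf.1.2.2 i
      rw [Finset.sum_add_distrib, Finset.sum_add_distrib]
      have h1 : (∑ a ∈ N.A.filter (fun a => a.1 = i), N.chi C a)
          - ∑ a ∈ N.A.filter (fun a => a.2 = i), N.chi C a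
          = ∑ a ∈ N.A, (N.chi C a : ℤ)
              * ((if a.1 = i then (1 : ℤ) else 0) - (if a.2 = i then 1 else 0)) := by
        rw [Finset.sum_filter, Finset.sum_filter, ← Finset.sum_sub_distrib]
        apply Finset.sum_congr rfl
        intro a _
        split_ifs <;> push_cast <;> ring
      have h2 := NetworkAux.sum_chi_mul (M := ℤ) N C hCproper hkey'
        (fun a => (if a.1 = i then (1 : ℤ) else 0) - (if a.2 = i then 1 else 0))
      simp only [Int.cast_id] at h2
      have h3 : ∑ e ∈ C.arcs,
          (if e ∈ N.A
            then ((if e.1 = i then (1 : ℤ) else 0) - (if e.2 = i then 1 else 0))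
            else -(((if (e.2, e.1).1 = i then (1 : ℤ) else 0)
              - (if (e.2, e.1).2 = i then 1 else 0))))
          = ∑ e ∈ C.arcs,
            ((if e.1 = i then (1 : ℤ) else 0) - (if e.2 = i then 1 else 0)) := by
        apply Finset.sum_congr rfl
        intro e _
        split_ifs <;> ring
      have h4 : ∑ e ∈ C.arcs,
          ((if e.1 = i then (1 : ℤ) else 0) - (if e.2 = i then 1 else 0)) = 0 :=
        CycAux.telescope C (fun v => if v = i then (1 : ℤ) else 0)
      have h5 : (∑ a ∈ N.A.filter (fun a => a.1 = i), N.chi C a)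
          - ∑ a ∈ N.A.filter (fun a => a.2 = i), N.chi C a = 0 := by
        rw [h1, h2]
        refine Eq.trans ?_ h4
        apply Finset.sum_congr rfl
        intro e _
        split_ifs <;> ring
      omega
  have hcost : N.cost (fun a => f a + N.chi C a) = N.cost f := by
    rw [Network.cost, Network.cost]
    have hsplit : ∀ a ∈ N.A, N.c a * ((f a + N.chi C a : ℤ) : ℝ)
        = N.c a * (f a : ℝ) + (N.chi C a : ℝ) * N.c a := by
      intro a _; push_cast; ring
    rw [Finset.sum_congr rfl hsplit, Finset.sum_add_distrib]
    have h2 := NetworkAux.sum_chi_mul (M := ℝ) N C hCproper hkey' N.c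
    rw [h2]
    have h3 : ∀ e ∈ C.arcs, (if e ∈ N.A then N.c e else -N.c (e.2, e.1))
        = y e.2 - y e.1 := by
      intro e he
      rcases hkey e he with ⟨hA, hred, _, _⟩ | ⟨hA, hred, _, hnA⟩
      · rw [if_pos hA]
        have hred' : N.c e + y e.1 - y e.2 = 0 := hred
        linarith
      · rw [if_neg hnA]
        have hred' : N.c (e.2, e.1) + y e.2 - y e.1 = 0 := hred
        linarith
    rw [Finset.sum_congr rfl h3]
    have h4 : ∑ e ∈ C.arcs, (y e.2 - y e.1) = 0 := by
      have h5 := CycAux.telescope C y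
      have h6 : ∑ e ∈ C.arcs, (y e.2 - y e.1)
          = -∑ e ∈ C.arcs, (y e.1 - y e.2) := by
        rw [← Finset.sum_neg_distrib]
        apply Finset.sum_congr rfl
        intro e _; ring
      rw [h6, h5, neg_zero]
    rw [h4, add_zero]
  refine ⟨⟨hfeas, fun g hg => by rw [hcost]; exact hf.2 g hg⟩, ?_⟩
  intro heq
  obtain ⟨e, he⟩ := CycAux.arcs_nonempty C
  rcases hkey e he with ⟨hA, _, _, _⟩ | ⟨hA, _, _, hnA⟩
  · have h0 := congrFun heq e
    have h1 : N.chi C e = 1 := by rw [Network.chi, if_pos hA, Cyc.chi, if_pos he]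
    simp only [h1] at h0
    omega
  · have h0 := congrFun heq (e.2, e.1)
    have h1 : N.chi C (e.2, e.1) = -1 := by
      rw [Network.chi, if_pos hA, Cyc.chi, if_neg (hCproper e he),
        if_pos (show ((e.2, e.1).2, (e.2, e.1).1) ∈ C.arcs by simpa using he)]
    simp only [h1] at h0
    omega
end
end

section
/- Let f be an optimal integer flow of a network. There exists an optimal integer flow f' with f' ≠ f if and only if the residual graph D_f contains a proper 0-cycle, i.e. a proper directed cycle C with c(f,C) = 0. -/
open scoped Classical
noncomputable section

variable {V : Type} [Fintype V] [DecidableEq V]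

section AuxProof
set_option linter.unusedSectionVars false
namespace Cyc

lemma zip_len (C : Cyc V) : (C.verts.zip (C.verts.rotate 1)).length = C.verts.length := by
  simp [List.length_zip]

lemma map_fst (C : Cyc V) : (C.verts.zip (C.verts.rotate 1)).map Prod.fst = C.verts :=
  List.map_fst_zip (by simp)

lemma map_snd (C : Cyc V) : (C.verts.zip (C.verts.rotate 1)).map Prod.snd = C.verts.rotate 1 :=
  List.map_snd_zip (by simp)

lemma zip_nodup (C : Cyc V) : (C.verts.zip (C.verts.rotate 1)).Nodup := by
  have := C.nodup
  rw [← C.map_fst] at this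
  exact this.of_map _

lemma mem_arcs {C : Cyc V} {a : V × V} : a ∈ C.arcs ↔ a ∈ C.verts.zip (C.verts.rotate 1) := by
  simp [Cyc.arcs]

private lemma len_filter_fst (l : List (V × V)) (i : V) :
    (l.filter (fun e => e.1 = i)).length = (l.map Prod.fst).count i := by
  induction l with
  | nil => simp
  | cons a t ih => by_cases h : a.1 = i <;>
      simp [List.filter_cons, List.count_cons, h, ih]

private lemma len_filter_snd (l : List (V × V)) (i : V) :
    (l.filter (fun e => e.2 = i)).length = (l.map Prod.snd).count i := by
  induction l with
  | nil => simp
  | cons a t ih => by_cases h : a.2 = i <;>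
      simp [List.filter_cons, List.count_cons, h, ih]

private lemma filter_arcs_eq (C : Cyc V) (p : V × V → Prop) :
    C.arcs.filter p = ((C.verts.zip (C.verts.rotate 1)).filter (fun e => p e)).toFinset := by
  ext a; simp [Cyc.arcs]

lemma card_filter_fst (C : Cyc V) (i : V) :
    (C.arcs.filter (fun e => e.1 = i)).card = if i ∈ C.verts then 1 else 0 := by
  rw [show (C.arcs.filter (fun e => e.1 = i))
      = ((C.verts.zip (C.verts.rotate 1)).filter (fun e => e.1 = i)).toFinset from by
      ext a; simp [Cyc.arcs],
    List.toFinset_card_of_nodup (C.zip_nodup.filter _), len_filter_fst, C.map_fst]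
  by_cases hmem : i ∈ C.verts
  · simp only [hmem, if_true]; exact List.count_eq_one_of_mem C.nodup hmem
  · simp only [hmem, if_false]; exact List.count_eq_zero_of_not_mem hmem

lemma card_filter_snd (C : Cyc V) (i : V) :
    (C.arcs.filter (fun e => e.2 = i)).card = if i ∈ C.verts then 1 else 0 := by
  rw [show (C.arcs.filter (fun e => e.2 = i))
      = ((C.verts.zip (C.verts.rotate 1)).filter (fun e => e.2 = i)).toFinset from by
      ext a; simp [Cyc.arcs],
    List.toFinset_card_of_nodup (C.zip_nodup.filter _), len_filter_snd, C.map_snd]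
  have hnd : (C.verts.rotate 1).Nodup := List.nodup_rotate.2 C.nodup
  have hm : i ∈ C.verts.rotate 1 ↔ i ∈ C.verts := List.mem_rotate
  by_cases hmem : i ∈ C.verts
  · simp only [hmem, if_true]; exact List.count_eq_one_of_mem hnd (hm.2 hmem)
  · simp only [hmem, if_false]; exact List.count_eq_zero_of_not_mem (fun h => hmem (hm.1 h))

lemma arcs_nonempty (C : Cyc V) : C.arcs.Nonempty := by
  have h2 := C.two_le
  have : 0 < (C.verts.zip (C.verts.rotate 1)).length := by rw [C.zip_len]; omega
  obtain ⟨a, ha⟩ := List.exists_mem_of_length_pos this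
  exact ⟨a, mem_arcs.2 ha⟩

end Cyc

namespace Network

variable {N : Network V} {C : Cyc V} {f f' : V × V → ℤ}

/-- pointwise rewriting of `N.chi` as difference of indicators -/
lemma chi_eq (hprop : C.Proper) (a : V × V) :
    N.chi C a = (if a ∈ C.arcs ∧ a ∈ N.A then 1 else 0)
              - (if (a.2, a.1) ∈ C.arcs ∧ a ∈ N.A then 1 else 0) := by
  unfold Network.chi Cyc.chi
  by_cases hA : a ∈ N.A
  · by_cases h1 : a ∈ C.arcs
    · have h2 : (a.2, a.1) ∉ C.arcs := hprop a h1
      simp [hA, h1, h2]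
    · by_cases h2 : (a.2, a.1) ∈ C.arcs <;> simp [hA, h1, h2]
  · simp [hA]

lemma div_chi_zero (hN : N.Wellformed) (hprop : C.Proper)
    (hsupp : ∀ a ∈ C.arcs, a ∈ N.A ∨ (a.2, a.1) ∈ N.A) (i : V) :
    ((∑ a ∈ N.A.filter fun a => a.1 = i, N.chi C a)
      - ∑ a ∈ N.A.filter fun a => a.2 = i, N.chi C a) = 0 := by
  classical
  set T := C.arcs with hT
  have hsum : ∀ (F : Finset (V × V)), (∀ a ∈ F, a ∈ N.A) →
      ∑ a ∈ F, N.chi C a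
        = ((F.filter (fun a => a ∈ T)).card : ℤ)
          - ((F.filter (fun a => (a.2, a.1) ∈ T)).card : ℤ) := by
    intro F hF
    have hpt : ∀ a ∈ F, N.chi C a
        = (if a ∈ T then (1:ℤ) else 0) - (if (a.2, a.1) ∈ T then 1 else 0) := by
      intro a ha
      rw [chi_eq hprop]
      simp [hF a ha, hT]
    rw [Finset.sum_congr rfl hpt, Finset.sum_sub_distrib]
    simp [Finset.sum_ite_eq, Finset.sum_boole, Finset.filter_mem_eq_inter]
  have c1 : ((N.A.filter fun a => a.1 = i).filter (fun a => a ∈ T)).card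
      = (T.filter (fun e => e ∈ N.A ∧ e.1 = i)).card := by
    congr 1; ext a; simp [Finset.mem_filter]; tauto
  have c3 : ((N.A.filter fun a => a.2 = i).filter (fun a => a ∈ T)).card
      = (T.filter (fun e => e ∈ N.A ∧ e.2 = i)).card := by
    congr 1; ext a; simp [Finset.mem_filter]; tauto
  have c2 : ((N.A.filter fun a => a.1 = i).filter (fun a => (a.2, a.1) ∈ T)).card
      = (T.filter (fun e => (e.2, e.1) ∈ N.A ∧ e.2 = i)).card := by
    apply Finset.card_bij (fun a _ => ((a.2 : V), (a.1 : V)))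
    · intro a ha
      simp only [Finset.mem_filter] at ha ⊢
      exact ⟨ha.2, ha.1.1, ha.1.2⟩
    · intro a ha b hb h
      simpa [Prod.ext_iff, and_comm] using h
    · intro e he
      simp only [Finset.mem_filter] at he
      refine ⟨(e.2, e.1), ?_, rfl⟩
      simp only [Finset.mem_filter]
      exact ⟨⟨he.2.1, he.2.2⟩, by simpa using he.1⟩
  have c4 : ((N.A.filter fun a => a.2 = i).filter (fun a => (a.2, a.1) ∈ T)).card
      = (T.filter (fun e => (e.2, e.1) ∈ N.A ∧ e.1 = i)).card := by
    apply Finset.card_bij (fun a _ => ((a.2 : V), (a.1 : V)))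
    · intro a ha
      simp only [Finset.mem_filter] at ha ⊢
      exact ⟨ha.2, ha.1.1, ha.1.2⟩
    · intro a ha b hb h
      simpa [Prod.ext_iff, and_comm] using h
    · intro e he
      simp only [Finset.mem_filter] at he
      refine ⟨(e.2, e.1), ?_, rfl⟩
      simp only [Finset.mem_filter]
      exact ⟨⟨he.2.1, he.2.2⟩, by simpa using he.1⟩
  have e1 : (T.filter (fun e => e ∈ N.A ∧ e.1 = i)).card
      + (T.filter (fun e => (e.2, e.1) ∈ N.A ∧ e.1 = i)).card
      = (T.filter (fun e => e.1 = i)).card := by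
    rw [← Finset.card_union_of_disjoint, ← Finset.filter_or]
    · congr 1
      ext e
      simp only [Finset.mem_filter]
      constructor
      · rintro ⟨he, (⟨_, hq⟩ | ⟨_, hq⟩)⟩ <;> exact ⟨he, hq⟩
      · rintro ⟨he, hq⟩
        rcases hsupp e he with h | h
        · exact ⟨he, Or.inl ⟨h, hq⟩⟩
        · exact ⟨he, Or.inr ⟨h, hq⟩⟩
    · rw [Finset.disjoint_filter]
      intro a _ h1 h2
      exact hN.1 a h1.1 h2.1
  have e2 : (T.filter (fun e => e ∈ N.A ∧ e.2 = i)).card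
      + (T.filter (fun e => (e.2, e.1) ∈ N.A ∧ e.2 = i)).card
      = (T.filter (fun e => e.2 = i)).card := by
    rw [← Finset.card_union_of_disjoint, ← Finset.filter_or]
    · congr 1
      ext e
      simp only [Finset.mem_filter]
      constructor
      · rintro ⟨he, (⟨_, hq⟩ | ⟨_, hq⟩)⟩ <;> exact ⟨he, hq⟩
      · rintro ⟨he, hq⟩
        rcases hsupp e he with h | h
        · exact ⟨he, Or.inl ⟨h, hq⟩⟩
        · exact ⟨he, Or.inr ⟨h, hq⟩⟩
    · rw [Finset.disjoint_filter]
      intro a _ h1 h2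
      exact hN.1 a h1.1 h2.1
  rw [hsum _ (fun a ha => (Finset.mem_filter.1 ha).1),
      hsum _ (fun a ha => (Finset.mem_filter.1 ha).1), c1, c2, c3, c4]
  have o1 := C.card_filter_fst i
  have o2 := C.card_filter_snd i
  rw [← hT] at o1 o2
  have heq : (T.filter (fun e => e.1 = i)).card = (T.filter (fun e => e.2 = i)).card := by
    rw [o1, o2]
  omega

end Network

namespace Network

variable {N : Network V} {C : Cyc V} {f f' : V × V → ℤ}

lemma cost_chi (hN : N.Wellformed) (hprop : C.Proper)
    (hsupp : ∀ a ∈ C.arcs, a ∈ N.A ∨ (a.2, a.1) ∈ N.A) :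
    ∑ a ∈ N.A, N.c a * ((N.chi C a : ℤ) : ℝ) = N.cycCost C := by
  classical
  set T := C.arcs with hT
  have hpt : ∀ a ∈ N.A, N.c a * ((N.chi C a : ℤ) : ℝ)
      = (if a ∈ T then N.c a else 0) - (if (a.2, a.1) ∈ T then N.c a else 0) := by
    intro a ha
    rw [chi_eq hprop]
    by_cases h1 : a ∈ T
    · have h2 : (a.2, a.1) ∉ T := hprop a h1
      simp [← hT, h1, h2, ha]
    · by_cases h2 : (a.2, a.1) ∈ T <;> simp [← hT, h1, h2, ha]
  rw [Finset.sum_congr rfl hpt, Finset.sum_sub_distrib, ← Finset.sum_filter, ← Finset.sum_filter]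
  have m1 : ∑ a ∈ N.A.filter (fun a => a ∈ T), N.c a
      = ∑ e ∈ T.filter (fun e => e ∈ N.A), N.resCost e := by
    rw [show N.A.filter (fun a => a ∈ T) = T.filter (fun e => e ∈ N.A) from by
      ext a; simp [Finset.mem_filter]; tauto]
    apply Finset.sum_congr rfl
    intro e he
    rw [Network.resCost, if_pos (Finset.mem_filter.1 he).2]
  have m2 : ∑ a ∈ N.A.filter (fun a => (a.2, a.1) ∈ T), N.c a
      = -∑ e ∈ T.filter (fun e => e ∉ N.A), N.resCost e := by
    rw [← Finset.sum_neg_distrib]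
    apply Finset.sum_bij (fun a _ => ((a.2 : V), (a.1 : V)))
    · intro a ha
      simp only [Finset.mem_filter] at ha ⊢
      refine ⟨ha.2, fun hmem => hN.1 a ha.1 hmem⟩
    · intro a _ b _ h
      simpa [Prod.ext_iff, and_comm] using h
    · intro e he
      simp only [Finset.mem_filter] at he
      have hsw : (e.2, e.1) ∈ N.A := (hsupp e he.1).resolve_left he.2
      refine ⟨(e.2, e.1), ?_, rfl⟩
      simp only [Finset.mem_filter]
      exact ⟨hsw, by simpa using he.1⟩
    · intro a ha
      simp only [Finset.mem_filter] at ha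
      have hns : ((a.2, a.1) : V × V) ∉ N.A := hN.1 a ha.1
      rw [Network.resCost, if_neg hns]
      simp
  rw [m1, m2, Network.cycCost, ← hT, sub_neg_eq_add]
  rw [← Finset.sum_filter_add_sum_filter_not T (fun e => e ∈ N.A)]

lemma feasible_add (hf : N.Feasible f) (z : V × V → ℤ)
    (hzero : ∀ a, a ∉ N.A → z a = 0)
    (hcap : ∀ a ∈ N.A, N.l a ≤ f a + z a ∧ f a + z a ≤ N.u a)
    (hdiv : ∀ i, ((∑ a ∈ N.A.filter fun a => a.1 = i, z a)
        - ∑ a ∈ N.A.filter fun a => a.2 = i, z a) = 0) :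
    N.Feasible (fun a => f a + z a) := by
  refine ⟨hcap, fun a ha => by simp [hf.2.1 a ha, hzero a ha], fun i => ?_⟩
  have h1 := hf.2.2 i
  have h2 := hdiv i
  simp only [Finset.sum_add_distrib]
  omega

lemma cost_add (f : V × V → ℤ) (z : V × V → ℤ) :
    N.cost (fun a => f a + z a) = N.cost f + ∑ a ∈ N.A, N.c a * ((z a : ℤ) : ℝ) := by
  unfold Network.cost
  rw [← Finset.sum_add_distrib]
  apply Finset.sum_congr rfl
  intro a _
  push_cast
  ring

end Network

namespace Network

variable {N : Network V} {C : Cyc V} {f f' : V × V → ℤ}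

lemma mem_resArcs {a : V × V} : a ∈ N.resArcs f ↔
    (a ∈ N.A ∧ f a < N.u a) ∨
    ((a.2, a.1) ∈ N.A ∧ N.l (a.2, a.1) < f (a.2, a.1)) := by
  unfold Network.resArcs
  simp only [Finset.mem_union, Finset.mem_filter, Finset.mem_image]
  constructor
  · rintro (⟨h1, h2⟩ | ⟨b, ⟨hb1, hb2⟩, hb3⟩)
    · exact Or.inl ⟨h1, h2⟩
    · subst hb3; exact Or.inr ⟨hb1, hb2⟩
  · rintro (⟨h1, h2⟩ | ⟨h1, h2⟩)
    · exact Or.inl ⟨h1, h2⟩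
    · exact Or.inr ⟨(a.2, a.1), ⟨h1, h2⟩, rfl⟩

lemma chi_zero_off (a : V × V) (ha : a ∉ N.A) : N.chi C a = 0 := by
  simp [Network.chi, ha]

lemma chi_cases (a : V × V) (ha : a ∈ N.A) :
    (N.chi C a = 1 ∧ a ∈ C.arcs) ∨
    (N.chi C a = -1 ∧ (a.2, a.1) ∈ C.arcs ∧ a ∉ C.arcs) ∨
    (N.chi C a = 0 ∧ a ∉ C.arcs ∧ (a.2, a.1) ∉ C.arcs) := by
  unfold Network.chi Cyc.chi
  by_cases h1 : a ∈ C.arcs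
  · exact Or.inl ⟨by simp [ha, h1], h1⟩
  · by_cases h2 : (a.2, a.1) ∈ C.arcs
    · exact Or.inr (Or.inl ⟨by simp [ha, h1, h2], h2, h1⟩)
    · exact Or.inr (Or.inr ⟨by simp [ha, h1, h2], h1, h2⟩)

/-- Augmenting a feasible flow along `ε·χ(C)`. -/
lemma augment (hN : N.Wellformed) (hprop : C.Proper)
    (hsupp : ∀ a ∈ C.arcs, a ∈ N.A ∨ (a.2, a.1) ∈ N.A)
    (hf : N.Feasible f) (ε : ℤ)
    (hcap : ∀ a ∈ N.A, N.l a ≤ f a + ε * N.chi C a ∧ f a + ε * N.chi C a ≤ N.u a) :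
    N.Feasible (fun a => f a + ε * N.chi C a) ∧
      N.cost (fun a => f a + ε * N.chi C a) = N.cost f + (ε : ℝ) * N.cycCost C := by
  constructor
  · apply feasible_add hf _ (fun a ha => by rw [chi_zero_off a ha, mul_zero]) hcap
    intro i
    rw [← Finset.mul_sum, ← Finset.mul_sum, ← mul_sub, div_chi_zero hN hprop hsupp i, mul_zero]
  · rw [cost_add]
    congr 1
    rw [← cost_chi hN hprop hsupp, Finset.mul_sum]
    apply Finset.sum_congr rfl
    intro a _
    push_cast
    ring

end Network

lemma mem_zip_rotate {α : Type*} {l : List α} {a : α × α} (hl : 0 < l.length)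
    (h : a ∈ l.zip (l.rotate 1)) :
    ∃ j, ∃ hj : j < l.length, a = (l[j], l[(j+1) % l.length]'(Nat.mod_lt _ hl)) := by
  obtain ⟨j, hj, hjeq⟩ := List.mem_iff_getElem.1 h
  have hjl : j < l.length := by simp [List.length_zip] at hj; omega
  refine ⟨j, hjl, ?_⟩
  rw [← hjeq, List.getElem_zip]
  congr 1
  rw [List.getElem_rotate]

namespace Network

variable {N : Network V} {f f' : V × V → ℤ}

lemma exists_cycle_of_ne (hN : N.Wellformed) (hf : N.Feasible f) (hf' : N.Feasible f')
    (hne : f' ≠ f) :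
    ∃ C : Cyc V, C.Proper ∧ (∀ a ∈ C.arcs, a ∈ N.A ∨ (a.2, a.1) ∈ N.A) ∧
      (∀ a ∈ N.A, (N.chi C a = 1 → f a < f' a) ∧ (N.chi C a = -1 → f' a < f a)) := by
  classical
  set S : Finset (V × V) :=
    N.A.filter (fun a => f a < f' a) ∪ (N.A.filter fun a => f' a < f a).image Prod.swap with hS
  have memS : ∀ a : V × V, a ∈ S ↔
      (a ∈ N.A ∧ f a < f' a) ∨ ((a.2, a.1) ∈ N.A ∧ f' (a.2, a.1) < f (a.2, a.1)) := by
    intro a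
    rw [hS]
    simp only [Finset.mem_union, Finset.mem_filter, Finset.mem_image]
    constructor
    · rintro (⟨h1, h2⟩ | ⟨b, ⟨hb1, hb2⟩, hb3⟩)
      · exact Or.inl ⟨h1, h2⟩
      · subst hb3; exact Or.inr ⟨hb1, hb2⟩
    · rintro (⟨h1, h2⟩ | ⟨h1, h2⟩)
      · exact Or.inl ⟨h1, h2⟩
      · exact Or.inr ⟨(a.2, a.1), ⟨h1, h2⟩, rfl⟩
  have hanti : ∀ a ∈ S, ((a.2 : V), (a.1 : V)) ∉ S := by
    intro a ha hb
    rw [memS] at ha hb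
    simp only [Prod.mk.eta] at hb
    rcases ha with ⟨h1, h2⟩ | ⟨h1, h2⟩ <;> rcases hb with ⟨g1, g2⟩ | ⟨g1, g2⟩
    · exact hN.1 a h1 g1
    · omega
    · omega
    · exact hN.1 a g1 h1
  have hloop : ∀ i : V, (i, i) ∉ S := fun i h => hanti (i, i) h h
  have hout : ∀ p : V × V, p ∈ S → ∃ k, (p.2, k) ∈ S := by
    intro p hp
    by_contra hno
    push_neg at hno
    have hA1 : ∀ a ∈ N.A.filter (fun a => a.1 = p.2), f' a - f a ≤ 0 := by
      rintro ⟨a1, a2⟩ ha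
      rw [Finset.mem_filter] at ha
      by_contra h
      push_neg at h
      have hmem : ((a1, a2) : V × V) ∈ S := (memS _).2 (Or.inl ⟨ha.1, by omega⟩)
      have := hno a2
      rw [← ha.2] at this
      exact this hmem
    have hA2 : ∀ a ∈ N.A.filter (fun a => a.2 = p.2), 0 ≤ f' a - f a := by
      rintro ⟨a1, a2⟩ ha
      rw [Finset.mem_filter] at ha
      by_contra h
      push_neg at h
      have hmem : ((a2, a1) : V × V) ∈ S :=
        (memS _).2 (Or.inr ⟨ha.1, show f' (a1, a2) < f (a1, a2) by omega⟩)
      have := hno a1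
      rw [← ha.2] at this
      exact this hmem
    have hdiv : (∑ a ∈ N.A.filter (fun a => a.1 = p.2), (f' a - f a))
        - ∑ a ∈ N.A.filter (fun a => a.2 = p.2), (f' a - f a) = 0 := by
      rw [Finset.sum_sub_distrib, Finset.sum_sub_distrib]
      have e1 := hf.2.2 p.2
      have e2 := hf'.2.2 p.2
      omega
    have hsum2 : ∑ a ∈ N.A.filter (fun a => a.1 = p.2), (f' a - f a) ≤ 0 :=
      Finset.sum_nonpos hA1
    have hsum3 : 0 ≤ ∑ a ∈ N.A.filter (fun a => a.2 = p.2), (f' a - f a) :=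
      Finset.sum_nonneg hA2
    rcases (memS p).1 hp with ⟨h1, h2⟩ | ⟨h1, h2⟩
    · have hpmem : p ∈ N.A.filter (fun a => a.2 = p.2) := Finset.mem_filter.2 ⟨h1, rfl⟩
      have hsum : 0 < ∑ a ∈ N.A.filter (fun a => a.2 = p.2), (f' a - f a) :=
        Finset.sum_pos' hA2 ⟨p, hpmem, by omega⟩
      omega
    · have hpmem : ((p.2 : V), (p.1 : V)) ∈ N.A.filter (fun a => a.1 = p.2) :=
        Finset.mem_filter.2 ⟨h1, rfl⟩
      have h3 : 0 < ∑ a ∈ N.A.filter (fun a => a.1 = p.2), (f a - f' a) :=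
        Finset.sum_pos' (fun a ha => by have := hA1 a ha; omega) ⟨(p.2, p.1), hpmem, by omega⟩
      have h4 : (∑ a ∈ N.A.filter (fun a => a.1 = p.2), (f a - f' a))
          = - ∑ a ∈ N.A.filter (fun a => a.1 = p.2), (f' a - f a) := by
        rw [← Finset.sum_neg_distrib]
        apply Finset.sum_congr rfl
        intro a _
        ring
      omega
  -- S is nonempty
  obtain ⟨a0, ha0⟩ : ∃ a, a ∈ S := by
    by_contra hempty
    push_neg at hempty
    apply hne
    funext a
    by_cases ha : a ∈ N.A
    · rcases lt_trichotomy (f a) (f' a) with h | h | h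
      · exact absurd ((memS a).2 (Or.inl ⟨ha, h⟩)) (hempty a)
      · exact h.symm
      · exact absurd ((memS (a.2, a.1)).2 (Or.inr ⟨by simpa using ha, by simpa using h⟩))
          (hempty (a.2, a.1))
    · rw [hf'.2.1 a ha, hf.2.1 a ha]
  set next : V → V := fun i => if h : ∃ k, (i, k) ∈ S then h.choose else i with hnext
  have hnextS : ∀ i, (∃ k, (i, k) ∈ S) → (i, next i) ∈ S := by
    intro i h
    show (i, dite _ _ _) ∈ S
    rw [dif_pos h]
    exact h.choose_spec
  set x : ℕ → V := fun n => next^[n] a0.1 with hx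
  have hxsucc : ∀ n, x (n + 1) = next (x n) := by
    intro n
    rw [hx]
    simp [Function.iterate_succ_apply']
  have inv : ∀ n, (x n, x (n + 1)) ∈ S := by
    intro n
    induction n with
    | zero =>
      rw [hxsucc 0]
      refine hnextS _ ⟨a0.2, ?_⟩
      rw [hx]
      simpa using ha0
    | succ n ih =>
      rw [hxsucc (n + 1)]
      exact hnextS _ (hout _ ih)
  obtain ⟨m0, n0, hmn0, hx0⟩ := Finite.exists_ne_map_eq_of_infinite x
  have hexP : ∃ k, ∃ m' < k, x m' = x k := by
    rcases hmn0.lt_or_gt with h | h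
    · exact ⟨n0, m0, h, hx0⟩
    · exact ⟨m0, n0, h, hx0.symm⟩
  set n := Nat.find hexP with hn
  obtain ⟨m, hmn, hxmn⟩ := Nat.find_spec hexP
  have hmin : ∀ k < n, ¬ ∃ m' < k, x m' = x k := fun k hk => Nat.find_min hexP hk
  set K := n - m with hK
  have hK2 : 2 ≤ K := by
    rcases Nat.lt_or_ge K 2 with h | h
    · exfalso
      have h1 : n = m + 1 := by omega
      have h2 := inv m
      rw [← h1, ← hxmn] at h2
      exact hloop _ h2
    · exact h
  set L : List V := (List.range K).map (fun k => x (m + k)) with hL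
  have hLlen : L.length = K := by simp [hL]
  have hxinj : ∀ i ∈ List.range K, ∀ j ∈ List.range K, x (m + i) = x (m + j) → i = j := by
    intro i hi j hj hij
    simp only [List.mem_range] at hi hj
    by_contra hne'
    rcases Nat.lt_or_ge i j with h | h
    · exact hmin (m + j) (by omega) ⟨m + i, by omega, hij⟩
    · exact hmin (m + i) (by omega) ⟨m + j, by omega, hij.symm⟩
  have hLnodup : L.Nodup := List.Nodup.map_on hxinj List.nodup_range
  set C : Cyc V := ⟨L, hLnodup, by rw [hLlen]; exact hK2⟩ with hC
  have hgetL : ∀ (j : ℕ) (hj : j < L.length), L[j] = x (m + j) := by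
    intro j hj
    simp [hL]
  have hvertsL : C.verts = L := rfl
  have harcS : ∀ a ∈ C.arcs, a ∈ S := by
    intro a ha
    rw [Cyc.mem_arcs, hvertsL] at ha
    have hlpos : 0 < L.length := by omega
    obtain ⟨j, hj, hjeq⟩ := mem_zip_rotate hlpos ha
    rw [hgetL j hj, hgetL ((j + 1) % L.length) (Nat.mod_lt _ hlpos)] at hjeq
    rw [hLlen] at hj
    have hmod : (j + 1) % L.length = (j + 1) % K := by rw [hLlen]
    rw [hmod] at hjeq
    by_cases hj1 : j + 1 < K
    · rw [Nat.mod_eq_of_lt hj1] at hjeq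
      rw [hjeq]
      exact inv (m + j)
    · have hjK : j + 1 = K := by omega
      have : (j + 1) % K = 0 := by rw [hjK]; simp
      rw [this] at hjeq
      have hx2 : x (m + 0) = x (m + j + 1) := by
        rw [Nat.add_zero, hxmn]
        congr 1
        omega
      rw [hx2] at hjeq
      rw [hjeq]
      have : m + j + 1 = (m + j) + 1 := rfl
      exact inv (m + j)
  refine ⟨C, ?_, ?_, ?_⟩
  · intro a ha hb
    exact hanti a (harcS a ha) (harcS _ hb)
  · intro a ha
    rcases (memS a).1 (harcS a ha) with ⟨h1, _⟩ | ⟨h1, _⟩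
    · exact Or.inl h1
    · exact Or.inr h1
  · intro a ha
    constructor
    · intro h1
      rcases chi_cases (C := C) a ha with ⟨hv, hm⟩ | ⟨hv, _, _⟩ | ⟨hv, _, _⟩
      · rcases (memS a).1 (harcS a hm) with ⟨_, hlt⟩ | ⟨hsw, _⟩
        · exact hlt
        · exact absurd hsw (hN.1 a ha)
      · omega
      · omega
    · intro h1
      rcases chi_cases (C := C) a ha with ⟨hv, _⟩ | ⟨hv, hm, _⟩ | ⟨hv, _, _⟩
      · omega
      · rcases (memS (a.2, a.1)).1 (harcS _ hm) with ⟨hsw, _⟩ | ⟨g1, g2⟩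
        · exact absurd hsw (hN.1 a ha)
        · simpa using g2
      · omega

end Network

end AuxProof

/-- An optimal integer flow `f'` different from `f` exists iff the residual graph `D_f`
contains a proper `0`-cycle, i.e. a proper directed cycle `C` with `c(f,C) = 0`. -/
theorem exists_other_optimal_iff_proper_zero_cycle (N : Network V) (hN : N.Wellformed)
    (f : V × V → ℤ) (hf : N.Optimal f) :
    (∃ f' : V × V → ℤ, N.Optimal f' ∧ f' ≠ f) ↔
      ∃ C : Cyc V, N.IsResCycle f C ∧ C.Proper ∧ N.cycCost C = 0 := by
  constructor
  · -- forward: from another optimal flow extract a proper 0-cycle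
    rintro ⟨f', hf'opt, hne⟩
    obtain ⟨C, hprop, hsupp, hslack⟩ :=
      Network.exists_cycle_of_ne hN hf.1 hf'opt.1 hne
    have hres : N.IsResCycle f C := by
      intro e he
      rw [Network.mem_resArcs]
      rcases hsupp e he with hA | hA
      · rcases Network.chi_cases (C := C) e hA with ⟨hv, _⟩ | ⟨_, _, hnm⟩ | ⟨_, hnm, _⟩
        · have h1 := (hslack e hA).1 hv
          have h2 := (hf'opt.1.1 e hA).2
          exact Or.inl ⟨hA, by omega⟩
        · exact absurd he hnm
        · exact absurd he hnm
      · rcases Network.chi_cases (C := C) (e.2, e.1) hA with ⟨_, hm⟩ | ⟨hv, _, _⟩ | ⟨_, _, hnm⟩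
        · exact absurd hm (hprop e he)
        · have h1 := (hslack (e.2, e.1) hA).2 hv
          have h2 := (hf'opt.1.1 (e.2, e.1) hA).1
          exact Or.inr ⟨hA, by omega⟩
        · exact absurd (by simpa using he) hnm
    have cap1 : ∀ a ∈ N.A, N.l a ≤ f a + 1 * N.chi C a ∧ f a + 1 * N.chi C a ≤ N.u a := by
      intro a ha
      have hb := hf.1.1 a ha
      have hb' := hf'opt.1.1 a ha
      rcases Network.chi_cases (C := C) a ha with ⟨hv, _⟩ | ⟨hv, _, _⟩ | ⟨hv, _, _⟩
      · have := (hslack a ha).1 hv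
        omega
      · have := (hslack a ha).2 hv
        omega
      · omega
    have cap2 : ∀ a ∈ N.A,
        N.l a ≤ f' a + (-1) * N.chi C a ∧ f' a + (-1) * N.chi C a ≤ N.u a := by
      intro a ha
      have hb := hf.1.1 a ha
      have hb' := hf'opt.1.1 a ha
      rcases Network.chi_cases (C := C) a ha with ⟨hv, _⟩ | ⟨hv, _, _⟩ | ⟨hv, _, _⟩
      · have := (hslack a ha).1 hv
        omega
      · have := (hslack a ha).2 hv
        omega
      · omega
    obtain ⟨feas1, cost1⟩ := Network.augment hN hprop hsupp hf.1 1 cap1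
    obtain ⟨feas2, cost2⟩ := Network.augment hN hprop hsupp hf'opt.1 (-1) cap2
    have hle1 := hf.2 _ feas1
    have hle2 := hf'opt.2 _ feas2
    rw [cost1] at hle1
    rw [cost2] at hle2
    push_cast at hle1 hle2
    refine ⟨C, hres, hprop, le_antisymm (by linarith) (by linarith)⟩
  · -- backward: augment along the 0-cycle
    rintro ⟨C, hres, hprop, hcost⟩
    have hsupp : ∀ a ∈ C.arcs, a ∈ N.A ∨ (a.2, a.1) ∈ N.A := by
      intro a ha
      exact (Network.mem_resArcs.1 (hres a ha)).imp And.left And.left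
    have cap : ∀ a ∈ N.A, N.l a ≤ f a + 1 * N.chi C a ∧ f a + 1 * N.chi C a ≤ N.u a := by
      intro a ha
      have hb := hf.1.1 a ha
      rcases Network.chi_cases (C := C) a ha with ⟨hv, hm⟩ | ⟨hv, hm, _⟩ | ⟨hv, _, _⟩
      · rcases Network.mem_resArcs.1 (hres a hm) with ⟨_, hlt⟩ | ⟨hsw, _⟩
        · omega
        · exact absurd hsw (hN.1 a ha)
      · rcases Network.mem_resArcs.1 (hres (a.2, a.1) hm) with ⟨hsw, _⟩ | ⟨_, hlt⟩
        · exact absurd hsw (hN.1 a ha)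
        · have hlt' : N.l a < f a := by simpa using hlt
          omega
      · omega
    obtain ⟨feas, costeq⟩ := Network.augment hN hprop hsupp hf.1 1 cap
    rw [hcost] at costeq
    simp only [mul_zero, add_zero] at costeq
    refine ⟨_, ⟨feas, fun g hg => by rw [costeq]; exact hf.2 g hg⟩, ?_⟩
    -- the new flow differs from f
    obtain ⟨e, he⟩ := C.arcs_nonempty
    intro heq
    rcases hsupp e he with hA | hA
    · rcases Network.chi_cases (C := C) e hA with ⟨hv, _⟩ | ⟨_, _, hnm⟩ | ⟨_, hnm, _⟩
      · have := congrFun heq e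
        omega
      · exact hnm he
      · exact hnm he
    · rcases Network.chi_cases (C := C) (e.2, e.1) hA with ⟨_, hm⟩ | ⟨hv, _, _⟩ | ⟨_, _, hnm⟩
      · exact hprop e he hm
      · have := congrFun heq (e.2, e.1)
        omega
      · exact hnm (by simpa using he)
end
end
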